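/- Let B be an annihilator nilpotent skew brace. If A is a sub skew brace of B such that A + B² = B (every element of B is a sum a + x with a ∈ A and x ∈ B²), then A = B. Here B² = B*B. -/

import Mathlib

/-- A skew brace: a type with two group structures `(B,+)` and `(B,∘)`
(the multiplicative group is written with `*`) sharing the same underlying set,
such that `a ∘ (b + c) = a ∘ b - a + a ∘ c`. -/
class SkewBrace (B : Type*) extends AddGroup B, Group B where
  circ_add : ∀ a b c : B, a * (b + c) = a * b - a + a * c

namespace SkewBrace

variable {B : Type*} [SkewBrace B]

/-- `lam a b = -a + a ∘ b`, i.e. `λ_a(b)`. -/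
def lam (a b : B) : B := -a + a * b

/-- `a * b` (the star operation) `= λ_a(b) - b = -a + a ∘ b - b`. -/
def starOp (a b : B) : B := -a + a * b - b

/-- `X * Y` : the additive subgroup generated by all `x * y`, `x ∈ X`, `y ∈ Y`,
regarded as a set. -/
def starSpan (X Y : Set B) : Set B :=
  (AddSubgroup.closure {z : B | ∃ x ∈ X, ∃ y ∈ Y, z = starOp x y} : AddSubgroup B)

/-- `[X,Y]₊` : the additive subgroup generated by all additive commutators
`x + y - x - y`, `x ∈ X`, `y ∈ Y`, regarded as a set. -/
def addCommSpan (X Y : Set B) : Set B :=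
  (AddSubgroup.closure {z : B | ∃ x ∈ X, ∃ y ∈ Y, z = x + y - x - y} : AddSubgroup B)

/-- A sub skew brace: a subset containing `0` and closed under both group
operations and both inverses. -/
def IsSubSkewBrace (S : Set B) : Prop :=
  0 ∈ S ∧ (∀ a ∈ S, ∀ b ∈ S, a + b ∈ S) ∧ (∀ a ∈ S, -a ∈ S) ∧
    (∀ a ∈ S, ∀ b ∈ S, a * b ∈ S) ∧ (∀ a ∈ S, a⁻¹ ∈ S)

/-- An ideal: a sub skew brace that is normal in `(B,+)` and in `(B,∘)` and
invariant under all `λ_a`. -/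
def IsIdeal (S : Set B) : Prop :=
  IsSubSkewBrace S ∧ (∀ a : B, ∀ i ∈ S, a + i - a ∈ S) ∧
    (∀ a : B, ∀ i ∈ S, a * i * a⁻¹ ∈ S) ∧ (∀ a : B, ∀ i ∈ S, lam a i ∈ S)

/-- The annihilator `Ann(B) = {x | x∘a = a∘x = x+a = a+x for all a}`. -/
def annSet (B : Type*) [SkewBrace B] : Set B :=
  {x | ∀ a : B, x * a = a * x ∧ x * a = x + a ∧ x + a = a + x}

/-- The annihilator series: `Ann₀(B) = 0` and `Ann_{n+1}(B)` is the preimage of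
`Ann(B/Annₙ(B))` under the quotient map; membership is expressed via coset
equalities modulo `Annₙ(B)`. -/
def annSeries (B : Type*) [SkewBrace B] : ℕ → Set B
  | 0 => {0}
  | n + 1 => {x | ∀ a : B,
      x * a - a * x ∈ annSeries B n ∧
      x * a - (x + a) ∈ annSeries B n ∧
      (x + a) - (a + x) ∈ annSeries B n}

/-- `B` is annihilator nilpotent if `Annₙ(B) = B` for some `n`. -/
def AnnNilpotent (B : Type*) [SkewBrace B] : Prop :=
  ∃ n : ℕ, annSeries B n = Set.univ

/-- `leftPow B n` is `B^{n+1}`: `B¹ = B`, `B^{n+1} = B * Bⁿ`. -/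
def leftPow (B : Type*) [SkewBrace B] : ℕ → Set B
  | 0 => Set.univ
  | n + 1 => starSpan Set.univ (leftPow B n)

/-- `rightPow B n` is `B⁽ⁿ⁺¹⁾`: `B⁽¹⁾ = B`, `B⁽ⁿ⁺¹⁾ = B⁽ⁿ⁾ * B`. -/
def rightPow (B : Type*) [SkewBrace B] : ℕ → Set B
  | 0 => Set.univ
  | n + 1 => starSpan (rightPow B n) Set.univ

/-- `B` is left nilpotent if `Bⁿ = 0` for some `n ≥ 1`. -/
def LeftNilpotent (B : Type*) [SkewBrace B] : Prop :=
  ∃ n : ℕ, leftPow B n = ({0} : Set B)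

/-- `B` is right nilpotent if `B⁽ⁿ⁾ = 0` for some `n ≥ 1`. -/
def RightNilpotent (B : Type*) [SkewBrace B] : Prop :=
  ∃ n : ℕ, rightPow B n = ({0} : Set B)

/-- `strongPow B n` is `B^[n+1]`: `B^[1] = B`, and `B^[n+1]` is the additive
subgroup generated by `⋃_{i=1}^{n} B^[i] * B^[n+1-i]`. -/
def strongPow (B : Type*) [SkewBrace B] : ℕ → Set B
  | 0 => Set.univ
  | n + 1 => (AddSubgroup.closure (⋃ j : Fin (n + 1),
      {z : B | ∃ x ∈ strongPow B j.1, ∃ y ∈ strongPow B (n - j.1), z = starOp x y}) :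
        AddSubgroup B)
  decreasing_by
  · exact j.isLt
  · omega

/-- `B` is strongly nilpotent if `B^[n] = 0` for some `n ≥ 1`. -/
def StronglyNilpotent (B : Type*) [SkewBrace B] : Prop :=
  ∃ n : ℕ, strongPow B n = ({0} : Set B)

/-- `gammaAux B n` is `Γ_[n+1](B)`: `Γ_[1](B) = B` and, for `n ≥ 2`, `Γ_[n](B)` is
the additive subgroup generated by the sets `Γ_[i](B) * Γ_[n-i](B)` and
`[Γ_[i](B), Γ_[n-i](B)]₊` for `1 ≤ i ≤ n-1`. -/
def gammaAux (B : Type*) [SkewBrace B] : ℕ → Set B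
  | 0 => Set.univ
  | n + 1 => (AddSubgroup.closure (⋃ j : Fin (n + 1),
      {z : B | ∃ x ∈ gammaAux B j.1, ∃ y ∈ gammaAux B (n - j.1),
        z = starOp x y ∨ z = x + y - x - y}) : AddSubgroup B)
  decreasing_by
  · exact j.isLt
  · omega

/-- `Γ_[n](B)` for `n ≥ 1` (one-based indexing as in the paper). -/
def gammaBr (B : Type*) [SkewBrace B] (n : ℕ) : Set B := gammaAux B (n - 1)

/-- `B` is finitely generated as a skew brace: there is a finite subset whose
smallest containing sub skew brace is `B` itself. -/
def SBFinitelyGenerated (B : Type*) [SkewBrace B] : Prop :=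
  ∃ S : Set B, S.Finite ∧ ∀ T : Set B, IsSubSkewBrace T → S ⊆ T → T = Set.univ

/-- `B` satisfies the ascending chain condition on sub skew braces. -/
def ACCSubSkewBrace (B : Type*) [SkewBrace B] : Prop :=
  ∀ f : ℕ → Set B, (∀ n, IsSubSkewBrace (f n)) → (∀ n, f n ⊆ f (n + 1)) →
    ∃ N : ℕ, ∀ n, N ≤ n → f n = f N


/-! ### Auxiliary lemmas -/

section Aux

variable {B : Type*} [SkewBrace B]

lemma one_eq_zero' : (1 : B) = 0 := by
  have h := circ_add (1 : B) 0 0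
  simp only [add_zero, one_mul, sub_eq_add_neg] at h
  -- h : (0 : B) = 0 + -1 + 0
  have : (0 : B) = -1 := by simpa using h
  simpa using this.symm

lemma zero_circ (a : B) : (0 : B) * a = a := by rw [← one_eq_zero', one_mul]

lemma circ_zero (a : B) : a * (0 : B) = a := by rw [← one_eq_zero', mul_one]

lemma mul_eq_add_lam (a b : B) : a * b = a + lam a b := by simp [lam]

lemma lam_one (b : B) : lam (1 : B) b = b := by
  simp [lam, one_eq_zero']

lemma lam_lam (a b c : B) : lam a (lam b c) = lam (a * b) c := by
  have h2 : a * (-b) = a - a * b + a := by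
    have h := circ_add a b (-b)
    rw [add_neg_cancel, circ_zero] at h
    -- h : a = a * b - a + a * (-b)
    have : a * (-b) = -(a * b - a) + a := by
      calc a * (-b) = -(a * b - a) + ((a * b - a) + a * (-b)) :=
            (neg_add_cancel_left _ _).symm
        _ = -(a * b - a) + a := by rw [← h]
    rw [this, neg_sub]
  show -a + a * (-b + b * c) = -(a * b) + (a * b) * c
  rw [circ_add a (-b) (b * c), h2, mul_assoc]
  simp only [sub_eq_add_neg, neg_add_rev, add_assoc, neg_add_cancel_left,
    add_neg_cancel_left, neg_neg]

/-! ### Congruence machinery modulo an ideal -/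

variable {I : Set B}

lemma R_refl (hI : IsIdeal I) (x : B) : x - x ∈ I := by
  simpa using hI.1.1

lemma R_of_eq (hI : IsIdeal I) {x y : B} (h : x = y) : x - y ∈ I := by
  subst h; exact R_refl hI x

lemma R_symm (hI : IsIdeal I) {x y : B} (h : x - y ∈ I) : y - x ∈ I := by
  have := hI.1.2.2.1 _ h
  rwa [neg_sub] at this

lemma R_trans (hI : IsIdeal I) {x y z : B} (h1 : x - y ∈ I) (h2 : y - z ∈ I) :
    x - z ∈ I := by
  have := hI.1.2.1 _ h1 _ h2
  rwa [sub_add_sub_cancel] at this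

lemma R_congr (hI : IsIdeal I) {x y x' y' : B} (h : x - y ∈ I) (hx : x = x')
    (hy : y = y') : x' - y' ∈ I := by
  subst hx; subst hy; exact h

lemma R_addr (hI : IsIdeal I) {x y : B} (h : x - y ∈ I) (c : B) :
    (x + c) - (y + c) ∈ I := by
  have e : (x + c) - (y + c) = x - y := by
    simp only [sub_eq_add_neg, neg_add_rev, add_assoc, add_neg_cancel_left]
  rwa [e]

lemma R_addl (hI : IsIdeal I) {x y : B} (h : x - y ∈ I) (c : B) :
    (c + x) - (c + y) ∈ I := by
  have := hI.2.1 c _ h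
  have e : c + (x - y) - c = (c + x) - (c + y) := by
    simp only [sub_eq_add_neg, neg_add_rev, add_assoc]
  rwa [e] at this

lemma R_neg (hI : IsIdeal I) {x y : B} (h : x - y ∈ I) : (-x) - (-y) ∈ I := by
  have h2 := R_symm hI h
  have := hI.2.1 (-x) _ h2
  have e : -x + (y - x) - (-x) = (-x) - (-y) := by
    simp only [sub_eq_add_neg, neg_neg, add_assoc, neg_add_cancel, add_zero]
  rwa [e] at this

lemma lam_mem (hI : IsIdeal I) (a : B) {i : B} (hi : i ∈ I) : lam a i ∈ I :=
  hI.2.2.2 a i hi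

lemma exists_add (hI : IsIdeal I) {x y : B} (h : x - y ∈ I) :
    ∃ i ∈ I, x = y + i := by
  refine ⟨-y + x, ?_, by simp⟩
  have := hI.2.1 (-y) _ h
  have e : -y + (x - y) - (-y) = -y + x := by
    simp only [sub_eq_add_neg, neg_neg, add_assoc, neg_add_cancel, add_zero]
  rwa [e] at this

lemma exists_circ (hI : IsIdeal I) {x y : B} (h : x - y ∈ I) :
    ∃ j ∈ I, x = y * j := by
  obtain ⟨i, hi, he⟩ := exists_add hI h
  refine ⟨lam y⁻¹ i, lam_mem hI _ hi, ?_⟩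
  rw [mul_eq_add_lam, lam_lam, mul_inv_cancel, lam_one]
  exact he

lemma R_mulr (hI : IsIdeal I) {x y : B} (h : x - y ∈ I) (b : B) :
    (x * b) - (y * b) ∈ I := by
  obtain ⟨j, hj, he⟩ := exists_circ hI h
  have hj' : b⁻¹ * j * b ∈ I := by
    have := hI.2.2.1 b⁻¹ j hj
    rwa [inv_inv] at this
  have he2 : x * b = (y * b) + lam (y * b) (b⁻¹ * j * b) := by
    rw [← mul_eq_add_lam, he]
    group
  rw [he2]
  exact hI.2.1 _ _ (lam_mem hI _ hj')

lemma R_mull (hI : IsIdeal I) {x y : B} (h : x - y ∈ I) (b : B) :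
    (b * x) - (b * y) ∈ I := by
  obtain ⟨j, hj, he⟩ := exists_circ hI h
  have he2 : b * x = (b * y) + lam (b * y) j := by
    rw [← mul_eq_add_lam, he, mul_assoc]
  rw [he2]
  exact hI.2.1 _ _ (lam_mem hI _ hj)

end Aux

/-! ### The annihilator series consists of ideals -/

section AnnSeries

variable {B : Type*} [SkewBrace B]

lemma mem_ann_succ_iff {x : B} {k : ℕ} :
    x ∈ annSeries B (k + 1) ↔ ∀ a : B,
      x * a - a * x ∈ annSeries B k ∧
      x * a - (x + a) ∈ annSeries B k ∧
      (x + a) - (a + x) ∈ annSeries B k := Iff.rfl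

lemma ann_zero_def : annSeries B 0 = ({0} : Set B) := rfl

lemma ann_ideal : ∀ k : ℕ, IsIdeal (annSeries B k) := by
  intro k
  induction k with
  | zero =>
    rw [ann_zero_def]
    have h10 : (1 : B) = 0 := one_eq_zero'
    refine ⟨⟨rfl, ?_, ?_, ?_, ?_⟩, ?_, ?_, ?_⟩
    · rintro a rfl b rfl; simp
    · rintro a rfl; simp
    · rintro a rfl b rfl
      show (0 : B) * 0 = 0
      rw [zero_circ]
    · rintro a rfl
      show (0 : B)⁻¹ = 0
      rw [← h10, inv_one]
    · rintro a i rfl; simp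
    · rintro a i rfl
      show a * 0 * a⁻¹ = 0
      rw [← h10, mul_one, mul_inv_cancel]
    · rintro a i rfl
      show lam a 0 = 0
      simp [lam, circ_zero]
  | succ k ih =>
    set C := annSeries B k with hC
    set S := annSeries B (k + 1) with hS
    -- basic facts about members of S
    have h1 : ∀ x ∈ S, ∀ a : B, x * a - (x + a) ∈ C := fun x hx a => (hx a).2.1
    have h2 : ∀ x ∈ S, ∀ a : B, a * x - (x + a) ∈ C := fun x hx a =>
      R_trans ih (R_symm ih (hx a).1) ((hx a).2.1)
    have h3 : ∀ x ∈ S, ∀ a : B, (x + a) - (a + x) ∈ C := fun x hx a => (hx a).2.2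
    -- closure of S under congruence mod C
    have hmemR : ∀ x ∈ S, ∀ x' : B, x' - x ∈ C → x' ∈ S := by
      intro x hx x' hR a
      refine ⟨?_, ?_, ?_⟩
      · exact R_trans ih (R_mulr ih hR a)
          (R_trans ih ((hx a).1) (R_mull ih (R_symm ih hR) a))
      · exact R_trans ih (R_mulr ih hR a)
          (R_trans ih ((hx a).2.1) (R_addr ih (R_symm ih hR) a))
      · exact R_trans ih (R_addr ih hR a)
          (R_trans ih ((hx a).2.2) (R_addl ih (R_symm ih hR) a))
    have hzero : (0 : B) ∈ S := by
      intro a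
      refine ⟨?_, ?_, ?_⟩ <;> simp [zero_circ, circ_zero] <;> exact ih.1.1
    have haddmem : ∀ x ∈ S, ∀ y ∈ S, x + y ∈ S := by
      intro x hx y hy
      have e1 : (x * y) - (x + y) ∈ C := h1 x hx y
      intro a
      have Hii : (x + y) * a - ((x + y) + a) ∈ C := by
        have s1 := R_mulr ih (R_symm ih e1) a
        have s2 := R_mull ih (h1 y hy a) x
        rw [← mul_assoc] at s2
        have s3 := h1 x hx (y + a)
        rw [← add_assoc] at s3
        exact R_trans ih s1 (R_trans ih s2 s3)
      have Hiii : ((x + y) + a) - (a + (x + y)) ∈ C := by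
        have s1 := R_addl ih (h3 y hy a) x
        simp only [← add_assoc] at s1
        have s2 := R_addr ih (h3 x hx a) y
        have := R_trans ih s1 s2
        rwa [add_assoc a x y] at this
      have Ha : a * (x + y) - ((x + y) + a) ∈ C := by
        have s1 := R_mull ih (R_symm ih e1) a
        have s2 : a * (x * y) - ((a * x) + y) ∈ C := by
          have t := R_trans ih (h2 y hy (a * x)) (h3 y hy (a * x))
          exact R_congr ih t (mul_assoc a x y) rfl
        have s3 : (a * x) + y - ((x + a) + y) ∈ C := R_addr ih (h2 x hx a) y
        have s4 : (x + a) + y - ((x + y) + a) ∈ C := by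
          have t := R_addl ih (R_symm ih (h3 y hy a)) x
          simp only [← add_assoc] at t
          exact t
        exact R_trans ih s1 (R_trans ih s2 (R_trans ih s3 s4))
      exact ⟨R_trans ih Hii (R_symm ih Ha), Hii, Hiii⟩
    have hinvR : ∀ x ∈ S, x⁻¹ - (-x) ∈ C := by
      intro x hx
      have t1 : x * x⁻¹ - (x + x⁻¹) ∈ C := h1 x hx x⁻¹
      rw [mul_inv_cancel, one_eq_zero'] at t1
      have t2 : (x + x⁻¹) - 0 ∈ C := R_symm ih t1
      rw [sub_zero] at t2
      have t3 := ih.2.1 (-x) _ t2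
      have e : -x + (x + x⁻¹) - (-x) = x⁻¹ - (-x) := by
        simp only [sub_eq_add_neg, neg_neg, neg_add_cancel_left]
      rwa [e] at t3
    have hnegmem : ∀ x ∈ S, -x ∈ S := by
      intro x hx
      have hinv := hinvR x hx
      intro a
      have hcinva : a * x⁻¹ - (-x + a) ∈ C := by
        have t1 : x * (a * x⁻¹) - (a * x⁻¹) * x ∈ C := (hx (a * x⁻¹)).1
        rw [mul_assoc (a) x⁻¹ x, inv_mul_cancel, mul_one] at t1
        have t2 : x * (a * x⁻¹) - (x + a * x⁻¹) ∈ C := h1 x hx _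
        have t3 : (x + a * x⁻¹) - a ∈ C := R_trans ih (R_symm ih t2) t1
        have t4 := R_addl ih t3 (-x)
        rwa [neg_add_cancel_left] at t4
      have hinva : x⁻¹ * a - (-x + a) ∈ C := by
        have t1 : x * (x⁻¹ * a) - (x + x⁻¹ * a) ∈ C := h1 x hx _
        rw [← mul_assoc, mul_inv_cancel, one_mul] at t1
        have t2 := R_addl ih (R_symm ih t1) (-x)
        rwa [neg_add_cancel_left] at t2
      have c_ii : (-x) * a - ((-x) + a) ∈ C :=
        R_trans ih (R_mulr ih (R_symm ih hinv) a) hinva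
      have c_ir : a * (-x) - (-x + a) ∈ C :=
        R_trans ih (R_mull ih (R_symm ih hinv) a) hcinva
      have c_i : (-x) * a - a * (-x) ∈ C := R_trans ih c_ii (R_symm ih c_ir)
      have c_iii : ((-x) + a) - (a + (-x)) ∈ C := by
        have t := h3 x hx a
        have s1 := R_addr ih (R_addl ih t (-x)) (-x)
        have e1 : (-x + (x + a)) + -x = a + -x := by
          rw [neg_add_cancel_left]
        have e2 : (-x + (a + x)) + -x = -x + a := by
          simp only [add_assoc, add_neg_cancel, add_zero]
        rw [e1, e2] at s1
        exact R_symm ih s1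
      exact ⟨c_i, c_ii, c_iii⟩
    have hmulmem : ∀ x ∈ S, ∀ y ∈ S, x * y ∈ S := by
      intro x hx y hy
      exact hmemR (x + y) (haddmem x hx y hy) (x * y) (h1 x hx y)
    have hinvmem : ∀ x ∈ S, x⁻¹ ∈ S := by
      intro x hx
      exact hmemR (-x) (hnegmem x hx) x⁻¹ (hinvR x hx)
    refine ⟨⟨hzero, haddmem, hnegmem, hmulmem, hinvmem⟩, ?_, ?_, ?_⟩
    · -- additive normality
      intro a i hi
      apply hmemR i hi
      have s := R_addr ih (R_symm ih (h3 i hi a)) (-a)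
      have e : (i + a) + -a = i := by rw [add_assoc, add_neg_cancel, add_zero]
      rw [e] at s
      have e2 : (a + i) + -a = a + i - a := by rw [sub_eq_add_neg]
      rwa [e2] at s
    · -- circle normality
      intro a i hi
      apply hmemR i hi
      have s := R_mulr ih (R_symm ih (hi a).1) a⁻¹
      have e : (i * a) * a⁻¹ = i := by group
      rw [e] at s
      exact s
    · -- lambda invariance
      intro a i hi
      apply hmemR i hi
      have t : a * i - (a + i) ∈ C := R_trans ih (h2 i hi a) (h3 i hi a)
      have s := R_addl ih t (-a)
      rw [neg_add_cancel_left] at s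
      exact s

lemma ann_h1 {k : ℕ} {x : B} (hx : x ∈ annSeries B (k + 1)) (a : B) :
    x * a - (x + a) ∈ annSeries B k := (hx a).2.1

lemma ann_h2 {k : ℕ} {x : B} (hx : x ∈ annSeries B (k + 1)) (a : B) :
    a * x - (x + a) ∈ annSeries B k :=
  R_trans (ann_ideal k) (R_symm (ann_ideal k) (hx a).1) ((hx a).2.1)

lemma ann_h3 {k : ℕ} {x : B} (hx : x ∈ annSeries B (k + 1)) (a : B) :
    (x + a) - (a + x) ∈ annSeries B k := (hx a).2.2

/-- The key congruence: `starOp (a+c) (a'+c') ≡ starOp a a'` mod `annSeries B k`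
whenever `c, c'` lie in `annSeries B (k+1)`. -/
lemma star_congr {k : ℕ} {a a' c c' : B}
    (hc : c ∈ annSeries B (k + 1)) (hc' : c' ∈ annSeries B (k + 1)) :
    starOp (a + c) (a' + c') - starOp a a' ∈ annSeries B k := by
  have ih := ann_ideal (B := B) k
  set C := annSeries B k with hCdef
  have hcc' : c + c' ∈ annSeries B (k + 1) :=
    (ann_ideal (k + 1)).1.2.1 c hc c' hc'
  set b := a + c with hb
  set b' := a' + c' with hb'
  have sB : b - (c * a) ∈ C := by
    have t1 : (a + c) - (c + a) ∈ C := R_symm ih (ann_h3 hc a)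
    have t2 : (c + a) - (c * a) ∈ C := R_symm ih (ann_h1 hc a)
    exact R_trans ih t1 t2
  have sB' : b' - (c' * a') ∈ C := by
    have t1 : (a' + c') - (c' + a') ∈ C := R_symm ih (ann_h3 hc' a')
    have t2 : (c' + a') - (c' * a') ∈ C := R_symm ih (ann_h1 hc' a')
    exact R_trans ih t1 t2
  have s4 : b * b' - (c * a) * (c' * a') ∈ C :=
    R_trans ih (R_mulr ih sB b') (R_mull ih sB' (c * a))
  have s5 : (c * a) * (c' * a') - (c * c') * (a * a') ∈ C := by
    have hswap : (a * c') - (c' * a) ∈ C := R_symm ih ((hc' a).1)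
    have t := R_mull ih (R_mulr ih hswap a') c
    refine R_congr ih t ?_ ?_ <;> group
  have s6 : (c * c') * (a * a') - ((c + c') + (a * a')) ∈ C :=
    R_trans ih (R_mulr ih (ann_h1 hc c') (a * a')) (ann_h1 hcc' (a * a'))
  have sBB : b * b' - ((c + c') + a * a') ∈ C :=
    R_trans ih s4 (R_trans ih s5 s6)
  have s7 := R_addr ih (R_addl ih sBB (-b)) (-b')
  -- s7 : (-b + b*b') + -b' - ((-b + ((c+c') + a*a')) + -b') ∈ C
  have e1 : (-b + b * b') + -b' = starOp b b' := by
    simp only [starOp, sub_eq_add_neg]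
  rw [e1] at s7
  -- now handle the second term T = (-b + ((c+c') + a*a')) + -b'
  have t1 : ((-b + ((c + c') + a * a')) + -b')
      - (-c + ((c + -a) + ((c' + a * a') + (-c' + -a')))) ∈ C := by
    have hswapA : (-a + c) - (c + -a) ∈ C := R_symm ih (ann_h3 hc (-a))
    have t := R_addl ih (R_addr ih hswapA ((c' + a * a') + (-c' + -a'))) (-c)
    refine R_congr ih t ?_ ?_
    · rw [hb, hb']
      simp only [neg_add_rev, add_assoc]
    · rfl
  have t2 : (-c + ((c + -a) + ((c' + a * a') + (-c' + -a'))))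
      - (-a + ((c' + a * a') + (-c' + -a'))) ∈ C := by
    apply R_of_eq ih
    simp only [add_assoc, neg_add_cancel_left]
  have t3 : (-a + ((c' + a * a') + (-c' + -a')))
      - (-a + ((a * a' + c') + (-c' + -a'))) ∈ C := by
    have hswapB : (c' + a * a') - (a * a' + c') ∈ C := ann_h3 hc' (a * a')
    exact R_addl ih (R_addr ih hswapB (-c' + -a')) (-a)
  have t4 : (-a + ((a * a' + c') + (-c' + -a'))) - starOp a a' ∈ C := by
    apply R_of_eq ih
    simp only [starOp, sub_eq_add_neg, add_assoc, add_neg_cancel_left]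
  exact R_trans ih s7 (R_trans ih t1 (R_trans ih t2 (R_trans ih t3 t4)))

end AnnSeries

/-- Theorem 5.2: if `B` is an annihilator nilpotent skew brace and `A` is a
sub skew brace with `A + B² = B`, then `A = B`. Here `B² = B * B`. -/
theorem stmt18 {B : Type*} [SkewBrace B] (hann : AnnNilpotent B)
    (A : Set B) (hA : IsSubSkewBrace A)
    (hsum : ∀ b : B, ∃ a ∈ A, ∃ x ∈ starSpan (Set.univ : Set B) Set.univ, b = a + x) :
    A = Set.univ := by
  obtain ⟨n, hn⟩ := hann
  -- P k : every element of B is a + c with a ∈ A, c ∈ annSeries B k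
  set P : ℕ → Prop :=
    fun k => ∀ b : B, ∃ a ∈ A, ∃ c ∈ annSeries B k, b = a + c with hP
  have step : ∀ k : ℕ, P (k + 1) → P k := by
    intro k hk b
    obtain ⟨a, ha, x, hx, rfl⟩ := hsum b
    have hI := ann_ideal (B := B) k
    -- the subgroup A + annSeries B k
    let Sgrp : AddSubgroup B :=
      { carrier := {z : B | ∃ a' ∈ A, ∃ c ∈ annSeries B k, z = a' + c}
        add_mem' := by
          rintro z w ⟨a1, ha1, c1, hc1, rfl⟩ ⟨a2, ha2, c2, hc2, rfl⟩
          refine ⟨a1 + a2, hA.2.1 a1 ha1 a2 ha2,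
            (-a2 + c1 + a2) + c2, ?_, ?_⟩
          · apply hI.1.2.1 _ ?_ _ hc2
            have := hI.2.1 (-a2) c1 hc1
            rwa [sub_neg_eq_add] at this
          · simp only [add_assoc, add_neg_cancel_left, neg_add_cancel_left]
        zero_mem' := ⟨0, hA.1, 0, hI.1.1, by simp⟩
        neg_mem' := by
          rintro z ⟨a1, ha1, c1, hc1, rfl⟩
          refine ⟨-a1, hA.2.2.1 a1 ha1, a1 + (-c1) - a1, ?_, ?_⟩
          · exact hI.2.1 a1 _ (hI.1.2.2.1 c1 hc1)
          · simp only [neg_add_rev, sub_eq_add_neg, add_assoc,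
              neg_add_cancel_left] }
    have hgen : {z : B | ∃ u ∈ (Set.univ : Set B), ∃ v ∈ (Set.univ : Set B),
        z = starOp u v} ⊆ (Sgrp : Set B) := by
      rintro z ⟨u, -, v, -, rfl⟩
      obtain ⟨a1, ha1, c1, hc1, rfl⟩ := hk u
      obtain ⟨a2, ha2, c2, hc2, rfl⟩ := hk v
      have key : starOp (a1 + c1) (a2 + c2) - starOp a1 a2 ∈ annSeries B k :=
        star_congr hc1 hc2
      obtain ⟨i, hi, he⟩ := exists_add hI key
      have hstarA : starOp a1 a2 ∈ A := by
        have hm : a1 * a2 ∈ A := hA.2.2.2.1 a1 ha1 a2 ha2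
        have : (-a1 + a1 * a2) + (-a2) ∈ A :=
          hA.2.1 _ (hA.2.1 _ (hA.2.2.1 a1 ha1) _ hm) _ (hA.2.2.1 a2 ha2)
        simpa [starOp, sub_eq_add_neg] using this
      exact ⟨starOp a1 a2, hstarA, i, hi, he⟩
    have hxS : x ∈ (Sgrp : Set B) := by
      have hle : AddSubgroup.closure {z : B | ∃ u ∈ (Set.univ : Set B),
          ∃ v ∈ (Set.univ : Set B), z = starOp u v} ≤ Sgrp :=
        (AddSubgroup.closure_le _).2 hgen
      exact hle hx
    obtain ⟨a'', ha'', c, hc, rfl⟩ := hxS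
    exact ⟨a + a'', hA.2.1 a ha a'' ha'', c, hc, by rw [add_assoc]⟩
  have down : ∀ k : ℕ, P k → P 0 := by
    intro k
    induction k with
    | zero => exact id
    | succ k ih => exact fun h => ih (step k h)
  have hPn : P n := by
    intro b
    refine ⟨0, hA.1, b, ?_, by simp⟩
    rw [hn]; trivial
  have hP0 := down n hPn
  apply Set.eq_univ_of_forall
  intro b
  obtain ⟨a, ha, c, hc, rfl⟩ := hP0 b
  have hc0 : c = 0 := hc
  rw [hc0, add_zero]
  exact ha

end SkewBrace
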